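/- For every real exponent q ≥ 3 and every a ≥ 0, one has (1+a)^q ≥ 1 + a^q + q·a + q·a^{q-1}. -/

import Mathlib

open Real

private lemma lemA (r t : ℝ) (hr : 1 ≤ r) (ht : 0 ≤ t) :
    t ^ r + r * t ^ (r - 1) ≤ (1 + t) ^ r := by
  rcases ht.eq_or_lt with h | h
  · subst h
    rcases hr.eq_or_lt with h1 | h1
    · subst h1; simp
    · rw [Real.zero_rpow (ne_of_gt (by linarith)), Real.zero_rpow (ne_of_gt (by linarith))]
      norm_num
  · have key : 1 + r * (1 / t) ≤ (1 + 1 / t) ^ r :=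
      one_add_mul_self_le_rpow_one_add (le_trans (by norm_num) (le_of_lt (one_div_pos.mpr h))) hr
    have h1t : (1 + t) = t * (1 + 1 / t) := by field_simp; ring
    calc t ^ r + r * t ^ (r - 1)
        = t ^ r * (1 + r * (1 / t)) := by
          rw [Real.rpow_sub h, Real.rpow_one]; field_simp
      _ ≤ t ^ r * (1 + 1 / t) ^ r := by
          apply mul_le_mul_of_nonneg_left key (Real.rpow_nonneg h.le r)
      _ = (1 + t) ^ r := by
          rw [h1t, Real.mul_rpow h.le (by positivity)]

private lemma lemB (p t : ℝ) (hp : 2 ≤ p) (ht : 0 ≤ t) :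
    1 + t ^ p + p * t ^ (p - 1) ≤ (1 + t) ^ p := by
  have hp1 : (1:ℝ) ≤ p := by linarith
  have hp2 : (1:ℝ) ≤ p - 1 := by linarith
  set F : ℝ → ℝ := fun t => (1 + t) ^ p - t ^ p - p * t ^ (p - 1) - 1 with hF
  have hderiv : ∀ x : ℝ, HasDerivAt F
      (1 * p * (1 + x) ^ (p - 1) - p * x ^ (p - 1) - p * ((p - 1) * x ^ (p - 1 - 1))) x := by
    intro x
    simpa [hF] using ((((hasDerivAt_id x).const_add 1).rpow_const (Or.inr hp1)).sub
      (Real.hasDerivAt_rpow_const (Or.inr hp1))|>.sub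
      ((Real.hasDerivAt_rpow_const (Or.inr hp2)).const_mul p)).sub_const 1
  have hmono : MonotoneOn F (Set.Ici 0) := by
    apply monotoneOn_of_deriv_nonneg (convex_Ici 0)
    · exact fun x _ => ((hderiv x).continuousAt).continuousWithinAt
    · exact fun x _ => ((hderiv x).differentiableAt).differentiableWithinAt
    · intro x hx
      rw [interior_Ici] at hx
      rw [(hderiv x).deriv]
      have hx0 : (0:ℝ) ≤ x := le_of_lt hx
      have hA := lemA (p - 1) x hp2 hx0
      nlinarith [Real.rpow_nonneg hx0 (p-1), Real.rpow_nonneg hx0 (p-1-1)]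
  have h0 : F 0 = 0 := by
    simp only [hF]
    rw [Real.zero_rpow (by positivity), Real.zero_rpow (by intro h; linarith [h])]
    norm_num
  have := hmono (Set.self_mem_Ici) (Set.mem_Ici.mpr ht) ht
  rw [h0] at this
  simp only [hF] at this
  linarith

/-- For every real exponent `q ≥ 3` and every `a ≥ 0`,
`(1+a)^q ≥ 1 + a^q + q·a + q·a^(q-1)` (real powers). -/
theorem stmt1 (q a : ℝ) (hq : 3 ≤ q) (ha : 0 ≤ a) :
    (1 + a) ^ q ≥ 1 + a ^ q + q * a + q * a ^ (q - 1) := by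
  have hq1 : (1:ℝ) ≤ q := by linarith
  have hq2 : (2:ℝ) ≤ q - 1 := by linarith
  have hq12 : (1:ℝ) ≤ q - 1 := by linarith
  set G : ℝ → ℝ := fun t => (1 + t) ^ q - t ^ q - q * t - q * t ^ (q - 1) - 1 with hG
  have hderiv : ∀ x : ℝ, HasDerivAt G
      (1 * q * (1 + x) ^ (q - 1) - q * x ^ (q - 1) - q * 1 - q * ((q - 1) * x ^ (q - 1 - 1)))
      x := by
    intro x
    simpa [hG] using (((((hasDerivAt_id x).const_add 1).rpow_const (Or.inr hq1)).sub
      (Real.hasDerivAt_rpow_const (Or.inr hq1))|>.sub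
      ((hasDerivAt_id x).const_mul q)|>.sub
      ((Real.hasDerivAt_rpow_const (Or.inr hq12)).const_mul q)).sub_const 1)
  have hmono : MonotoneOn G (Set.Ici 0) := by
    apply monotoneOn_of_deriv_nonneg (convex_Ici 0)
    · exact fun x _ => ((hderiv x).continuousAt).continuousWithinAt
    · exact fun x _ => ((hderiv x).differentiableAt).differentiableWithinAt
    · intro x hx
      rw [interior_Ici] at hx
      rw [(hderiv x).deriv]
      have hx0 : (0:ℝ) ≤ x := le_of_lt hx
      have hB := lemB (q - 1) x hq2 hx0
      nlinarith [Real.rpow_nonneg hx0 (q-1), Real.rpow_nonneg hx0 (q-1-1)]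
  have h0 : G 0 = 0 := by
    simp only [hG]
    rw [Real.zero_rpow (by positivity), Real.zero_rpow (by intro h; linarith [h])]
    norm_num
  have := hmono (Set.self_mem_Ici) (Set.mem_Ici.mpr ha) ha
  rw [h0] at this
  simp only [hG] at this
  linarith
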